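/- arXiv:2006.09298 — 2 statements merged into one kernel-verified Lean document; each statement's English description precedes it below -/
import Mathlib

section
/- Single-big-jump decomposition bound: with E₂(t) := Σ_{n=1}^t n E[1{S_n > γt} 1{T_n = t}], and for 0 < γ < η < 1, E₂(t) = Σ_{s≥1} E[N_{t−s} U_{t−s}] 1{γt < s ≤ ηt} p_o(s) + E[1{γt < S₁ ≤ ηt} U_t] + E[1{S₁ > ηt} N_t U_t], where E[U_0 N_0] is interpreted as 0 and where the second and third summands correspond to the case n = 1 and to the first waiting time exceeding ηt, respectively. -/
open Filter Topology MeasureTheory ProbabilityTheory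

section Aux

variable {Ω : Type*} [MeasureSpace Ω] [IsProbabilityMeasure (ℙ : Measure Ω)]
  {S : ℕ → Ω → ℕ}

omit [IsProbabilityMeasure (ℙ : Measure Ω)] in
private lemma aux_sum_meas (hmeas : ∀ i, Measurable (S i)) (I : Finset ℕ) :
    Measurable (fun ω => ∑ i ∈ I, S i ω) :=
  Finset.measurable_sum _ (fun i _ => hmeas i)

omit [IsProbabilityMeasure (ℙ : Measure Ω)] in
private lemma aux_prob_mul (hmeas : ∀ i, Measurable (S i))
    (hindep : iIndepFun S ℙ)
    {I : Finset ℕ} {j : ℕ} (hj : j ∉ I) (a b : ℕ) :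
    ℙ ({ω | S j ω = a} ∩ {ω | ∑ i ∈ I, S i ω = b})
      = ℙ {ω | S j ω = a} * ℙ {ω | ∑ i ∈ I, S i ω = b} := by
  have hind : IndepFun (∑ i ∈ I, S i) (S j) ℙ :=
    hindep.indepFun_finsetSum_of_notMem hmeas hj
  have h := hind.measure_inter_preimage_eq_mul {b} {a}
    MeasurableSet.of_discrete MeasurableSet.of_discrete
  have hset : (∑ i ∈ I, S i) ⁻¹' {b} = {ω | ∑ i ∈ I, S i ω = b} := by
    ext ω; simp [Finset.sum_apply]
  have hset2 : S j ⁻¹' {a} = {ω | S j ω = a} := by ext ω; simp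
  rw [hset, hset2] at h
  rw [Set.inter_comm] at h
  rw [h, mul_comm]

omit [IsProbabilityMeasure (ℙ : Measure Ω)] in
private lemma aux_ident (hmeas : ∀ i, Measurable (S i))
    (hident : ∀ i, Measure.map (S i) ℙ = Measure.map (S 0) ℙ) (j a : ℕ) :
    ℙ {ω | S j ω = a} = ℙ (S 0 ⁻¹' {a}) := by
  have h1 : {ω | S j ω = a} = S j ⁻¹' {a} := by ext ω; simp
  rw [h1, ← Measure.map_apply (hmeas j) (measurableSet_singleton a), hident j,
    Measure.map_apply (hmeas 0) (measurableSet_singleton a)]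

omit [IsProbabilityMeasure (ℙ : Measure Ω)] in
private lemma aux_step (hmeas : ∀ i, Measurable (S i))
    (hindep : iIndepFun S ℙ)
    (hident : ∀ i, Measure.map (S i) ℙ = Measure.map (S 0) ℙ)
    {I : Finset ℕ} {j : ℕ} (hj : j ∉ I) (k : ℕ) :
    ℙ {ω | ∑ i ∈ insert j I, S i ω = k}
      = ∑ a ∈ Finset.range (k+1), ℙ (S 0 ⁻¹' {a}) * ℙ {ω | ∑ i ∈ I, S i ω = k - a} := by
  classical
  have hdecomp : {ω | ∑ i ∈ insert j I, S i ω = k}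
      = ⋃ a ∈ Finset.range (k+1), ({ω | S j ω = a} ∩ {ω | ∑ i ∈ I, S i ω = k - a}) := by
    ext ω
    simp only [Set.mem_setOf_eq, Set.mem_iUnion, Set.mem_inter_iff, Finset.mem_range,
      Finset.sum_insert hj]
    constructor
    · intro h
      exact ⟨S j ω, by omega, rfl, by omega⟩
    · rintro ⟨a, ha, h1, h2⟩
      omega
  rw [hdecomp, measure_biUnion_finset]
  · refine Finset.sum_congr rfl (fun a _ => ?_)
    rw [aux_prob_mul hmeas hindep hj, aux_ident hmeas hident]
  · intro a _ b _ hab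
    refine Set.disjoint_left.2 (fun ω hω hω' => hab ?_)
    have := hω.1; have := hω'.1
    simp only [Set.mem_setOf_eq] at *
    omega
  · intro a _
    exact ((hmeas j) (MeasurableSet.of_discrete (s := {a}))).inter
      ((aux_sum_meas hmeas I) (MeasurableSet.of_discrete (s := {k - a})))

omit [IsProbabilityMeasure (ℙ : Measure Ω)] in
private lemma aux_card (hmeas : ∀ i, Measurable (S i))
    (hindep : iIndepFun S ℙ)
    (hident : ∀ i, Measure.map (S i) ℙ = Measure.map (S 0) ℙ) :
    ∀ (n : ℕ) (I : Finset ℕ), I.card = n → ∀ k,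
      ℙ {ω | ∑ i ∈ I, S i ω = k} = ℙ {ω | ∑ i ∈ Finset.range n, S i ω = k} := by
  classical
  intro n
  induction n with
  | zero =>
    intro I hI k
    rw [Finset.card_eq_zero] at hI
    subst hI
    simp
  | succ n ih =>
    intro I hI k
    obtain ⟨j, hj⟩ : I.Nonempty := Finset.card_pos.1 (by omega)
    have hjI : j ∉ I.erase j := Finset.notMem_erase j I
    have hcard : (I.erase j).card = n := by
      rw [Finset.card_erase_of_mem hj]; omega
    have h1 : I = insert j (I.erase j) := (Finset.insert_erase hj).symm
    rw [h1, aux_step hmeas hindep hident hjI k]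
    have h2 : Finset.range (n+1) = insert n (Finset.range n) := by
      rw [Finset.range_add_one]
    rw [h2, aux_step hmeas hindep hident (Finset.notMem_range_self) k]
    exact Finset.sum_congr rfl (fun a _ => by rw [ih _ hcard])

/-- Main formula: decomposition over the value of the `j`-th waiting time. -/
private lemma aux_main (hmeas : ∀ i, Measurable (S i))
    (hindep : iIndepFun S ℙ)
    (hident : ∀ i, Measure.map (S i) ℙ = Measure.map (S 0) ℙ)
    {j n : ℕ} (hjn : j < n) (c : ℕ → Prop) [DecidablePred c] (t' : ℕ) :
    (ℙ ({ω | c (S j ω)} ∩ {ω | ∑ i ∈ Finset.range n, S i ω = t'})).toReal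
      = ∑ s ∈ Finset.range (t'+1), if c s then
          (ℙ (S 0 ⁻¹' {s})).toReal *
            (ℙ {ω | ∑ i ∈ Finset.range (n-1), S i ω = t' - s}).toReal else 0 := by
  classical
  have hjmem : j ∈ Finset.range n := Finset.mem_range.2 hjn
  have hdecomp : {ω | c (S j ω)} ∩ {ω | ∑ i ∈ Finset.range n, S i ω = t'}
      = ⋃ s ∈ (Finset.range (t'+1)).filter c,
          ({ω | S j ω = s} ∩ {ω | ∑ i ∈ (Finset.range n).erase j, S i ω = t' - s}) := by
    ext ω
    have hsum : ∑ i ∈ Finset.range n, S i ω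
        = S j ω + ∑ i ∈ (Finset.range n).erase j, S i ω :=
      (Finset.add_sum_erase _ _ hjmem).symm
    simp only [Set.mem_inter_iff, Set.mem_setOf_eq, Set.mem_iUnion, Finset.mem_filter,
      Finset.mem_range]
    constructor
    · rintro ⟨hc, hsum'⟩
      exact ⟨S j ω, ⟨by omega, hc⟩, rfl, by omega⟩
    · rintro ⟨s, ⟨hs, hcs⟩, h1, h2⟩
      exact ⟨h1 ▸ hcs, by omega⟩
  have hmeasure : ℙ ({ω | c (S j ω)} ∩ {ω | ∑ i ∈ Finset.range n, S i ω = t'})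
      = ∑ s ∈ (Finset.range (t'+1)).filter c,
          ℙ (S 0 ⁻¹' {s}) * ℙ {ω | ∑ i ∈ Finset.range (n-1), S i ω = t' - s} := by
    rw [hdecomp, measure_biUnion_finset]
    · refine Finset.sum_congr rfl (fun s _ => ?_)
      rw [aux_prob_mul hmeas hindep (Finset.notMem_erase j _),
        aux_ident hmeas hident,
        aux_card hmeas hindep hident (n-1) _ (by rw [Finset.card_erase_of_mem hjmem,
          Finset.card_range])]
    · intro a _ b _ hab
      refine Set.disjoint_left.2 (fun ω hω hω' => hab ?_)
      have := hω.1; have := hω'.1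
      simp only [Set.mem_setOf_eq] at *
      omega
    · intro a _
      exact ((hmeas j) (MeasurableSet.of_discrete (s := {a}))).inter
        ((aux_sum_meas hmeas ((Finset.range n).erase j))
          (MeasurableSet.of_discrete (s := {t' - a})))
  rw [hmeasure, ENNReal.toReal_sum (fun s _ => ENNReal.mul_ne_top (measure_ne_top _ _)
    (measure_ne_top _ _))]
  rw [Finset.sum_filter]
  exact Finset.sum_congr rfl (fun s _ => by split_ifs <;> simp [ENNReal.toReal_mul])

end Aux

/-- Single-big-jump decomposition: for i.i.d. positive-integer waiting times with law
`p_o`, `t ≥ 2`, and `0 < γ < η < 1`,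
`∑_{n=1}^t n E[1{S_n > γt} 1{T_n = t}] =
  ∑_{s ≥ 1} E[N_{t-s} U_{t-s}] 1{γt < s ≤ ηt} p_o(s)
  + E[1{γt < S₁ ≤ ηt} U_t] + E[1{S₁ > ηt} N_t U_t]`. -/
theorem stmt_16 (Ω : Type*) [MeasureSpace Ω] [IsProbabilityMeasure (ℙ : Measure Ω)]
    (S : ℕ → Ω → ℕ) (hmeas : ∀ i, Measurable (S i))
    (hpos : ∀ i ω, 1 ≤ S i ω)
    (hindep : iIndepFun S ℙ)
    (hident : ∀ i, Measure.map (S i) ℙ = Measure.map (S 0) ℙ)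
    (po : ℕ → ℝ) (hpo : ∀ s : ℕ, po s = (ℙ (S 0 ⁻¹' {s})).toReal)
    (T : ℕ → Ω → ℕ) (hT : ∀ n ω, T n ω = ∑ i ∈ Finset.range n, S i ω)
    (N : ℕ → Ω → ℝ) (hN : ∀ t ω, N t ω =
      ∑ n ∈ Finset.Icc 1 t, if T n ω ≤ t then (1 : ℝ) else 0)
    (U : ℕ → Ω → ℝ) (hU : ∀ t ω, U t ω =
      ∑ n ∈ Finset.Icc 1 t, if T n ω = t then (1 : ℝ) else 0)
    (t : ℕ) (ht : 2 ≤ t) (γ η : ℝ) (hγ : 0 < γ) (hγη : γ < η) (hη : η < 1) :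
    (∑ n ∈ Finset.Icc 1 t, (n : ℝ) *
        ∫ ω, (if γ * t < (S (n - 1) ω : ℝ) then (1 : ℝ) else 0) *
          (if T n ω = t then (1 : ℝ) else 0) ∂ℙ) =
      (∑' s : ℕ, if γ * t < (s : ℝ) ∧ (s : ℝ) ≤ η * t then
          (∫ ω, N (t - s) ω * U (t - s) ω ∂ℙ) * po s else 0) +
      (∫ ω, (if γ * t < (S 0 ω : ℝ) ∧ (S 0 ω : ℝ) ≤ η * t then (1 : ℝ) else 0) *
          U t ω ∂ℙ) +
      ∫ ω, (if η * t < (S 0 ω : ℝ) then (1 : ℝ) else 0) * N t ω * U t ω ∂ℙ := by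
  classical
  have htpos : (0:ℝ) < t := by
    have : (0:ℕ) < t := by omega
    exact_mod_cast this
  have hγηt : γ * (t:ℝ) < η * t := by nlinarith
  have hηtt : η * (t:ℝ) < t := by nlinarith
  have hTmeas : ∀ n, Measurable (T n) := by
    intro n
    have : T n = fun ω => ∑ i ∈ Finset.range n, S i ω := funext (hT n)
    rw [this]; exact aux_sum_meas hmeas _
  set q : ℕ → ℕ → ℝ := fun m k => (ℙ {ω | ∑ i ∈ Finset.range m, S i ω = k}).toReal
    with hqdef
  have hq0 : ∀ m k, k < m → q m k = 0 := by
    intro m k hk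
    have hempty : {ω | ∑ i ∈ Finset.range m, S i ω = k} = ∅ := by
      ext ω
      simp only [Set.mem_setOf_eq, Set.mem_empty_iff_false, iff_false]
      intro h
      have hle : (Finset.range m).card • 1 ≤ ∑ i ∈ Finset.range m, S i ω :=
        Finset.card_nsmul_le_sum _ _ _ (fun i _ => hpos i ω)
      simp only [Finset.card_range, smul_eq_mul, mul_one] at hle
      omega
    simp [hqdef, hempty]
  have hTset : ∀ n k, {ω | T n ω = k} = {ω | ∑ i ∈ Finset.range n, S i ω = k} := by
    intro n k; ext ω; simp [hT]
  have hTsetMeas : ∀ n k, MeasurableSet {ω | T n ω = k} := by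
    intro n k
    exact (hTmeas n) (MeasurableSet.of_discrete (s := {k}))
  -- key integral formula
  have hkey : ∀ (c : ℕ → Prop) (j n : ℕ), j < n →
      (∫ ω, (if c (S j ω) then (1:ℝ) else 0) * (if T n ω = t then (1:ℝ) else 0) ∂ℙ)
        = ∑ s ∈ Finset.range (t+1), if c s then po s * q (n-1) (t-s) else 0 := by
    intro c j n hjn
    have hmeasA : MeasurableSet {ω | c (S j ω)} :=
      (hmeas j) (MeasurableSet.of_discrete (s := {x | c x}))
    calc (∫ ω, (if c (S j ω) then (1:ℝ) else 0) * (if T n ω = t then (1:ℝ) else 0) ∂ℙ)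
        = ∫ ω, Set.indicator ({ω | c (S j ω)} ∩ {ω | T n ω = t}) 1 ω ∂ℙ := by
          refine integral_congr_ae (Filter.Eventually.of_forall fun ω => ?_)
          by_cases h1 : c (S j ω) <;> by_cases h2 : T n ω = t <;>
            simp [Set.indicator_apply, h1, h2]
      _ = (ℙ ({ω | c (S j ω)} ∩ {ω | T n ω = t})).toReal :=
          integral_indicator_one (hmeasA.inter (hTsetMeas n t))
      _ = (ℙ ({ω | c (S j ω)} ∩ {ω | ∑ i ∈ Finset.range n, S i ω = t})).toReal := by
          rw [hTset n t]
      _ = ∑ s ∈ Finset.range (t+1), if c s then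
            (ℙ (S 0 ⁻¹' {s})).toReal *
              (ℙ {ω | ∑ i ∈ Finset.range (n-1), S i ω = t - s}).toReal else 0 :=
          aux_main hmeas hindep hident hjn c t
      _ = ∑ s ∈ Finset.range (t+1), if c s then po s * q (n-1) (t-s) else 0 := by
          refine Finset.sum_congr rfl fun s _ => ?_
          rw [hpo s]
  -- pointwise N*U identity
  have hNU : ∀ m ω, N m ω * U m ω
      = ∑ n ∈ Finset.Icc 1 m, (n:ℝ) * (if T n ω = m then (1:ℝ) else 0) := by
    intro m ω
    have hSM : StrictMono (fun n => T n ω) := by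
      refine strictMono_nat_of_lt_succ fun n => ?_
      have h1 := hpos n ω
      simp only [hT, Finset.sum_range_succ]
      omega
    by_cases hex : ∃ b, 1 ≤ b ∧ b ≤ m ∧ T b ω = m
    · obtain ⟨b, hb1, hbm, hbT⟩ := hex
      have huniq : ∀ n, T n ω = m → n = b := fun n hn =>
        hSM.injective (by simpa using hn.trans hbT.symm)
      have hU1 : U m ω = 1 := by
        rw [hU]
        rw [Finset.sum_eq_single b]
        · simp [hbT]
        · intro n _ hne
          rw [if_neg (fun h => hne (huniq n h))]
        · intro h; exact absurd (Finset.mem_Icc.2 ⟨hb1, hbm⟩) h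
      have hle_iff : ∀ n, T n ω ≤ m ↔ n ≤ b := by
        intro n
        constructor
        · intro h
          by_contra hlt
          push_neg at hlt
          have := hSM hlt
          simp only at this
          omega
        · intro h
          have : T n ω ≤ T b ω := hSM.monotone h
          omega
      have hNb : N m ω = b := by
        rw [hN]
        have hcongr : ∀ n ∈ Finset.Icc 1 m,
            (if T n ω ≤ m then (1:ℝ) else 0) = (if n ≤ b then (1:ℝ) else 0) := by
          intro n _
          by_cases h : T n ω ≤ m
          · rw [if_pos h, if_pos ((hle_iff n).1 h)]
          · rw [if_neg h, if_neg (fun hh => h ((hle_iff n).2 hh))]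
        rw [Finset.sum_congr rfl hcongr, ← Finset.sum_filter]
        have hfil : (Finset.Icc 1 m).filter (fun n => n ≤ b) = Finset.Icc 1 b := by
          ext x; simp only [Finset.mem_filter, Finset.mem_Icc]; omega
        have hb' : b + 1 - 1 = b := by omega
        rw [hfil, Finset.sum_const, Nat.card_Icc, hb', nsmul_eq_mul, mul_one]
      have hRHS : ∑ n ∈ Finset.Icc 1 m, (n:ℝ) * (if T n ω = m then (1:ℝ) else 0)
          = (b:ℝ) := by
        rw [Finset.sum_eq_single b]
        · rw [if_pos hbT, mul_one]
        · intro n _ hne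
          rw [if_neg (fun h => hne (huniq n h)), mul_zero]
        · intro h; exact absurd (Finset.mem_Icc.2 ⟨hb1, hbm⟩) h
      rw [hU1, hNb, hRHS, mul_one]
    · push_neg at hex
      have hU0 : U m ω = 0 := by
        rw [hU]
        refine Finset.sum_eq_zero fun n hn => ?_
        have h1 := Finset.mem_Icc.1 hn
        rw [if_neg (hex n h1.1 h1.2)]
      have hR0 : ∑ n ∈ Finset.Icc 1 m, (n:ℝ) * (if T n ω = m then (1:ℝ) else 0) = 0 := by
        refine Finset.sum_eq_zero fun n hn => ?_
        have h1 := Finset.mem_Icc.1 hn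
        rw [if_neg (hex n h1.1 h1.2), mul_zero]
      rw [hU0, hR0, mul_zero]
  -- expected value of N*U
  have hENU : ∀ m, (∫ ω, N m ω * U m ω ∂ℙ) = ∑ n ∈ Finset.Icc 1 m, (n:ℝ) * q n m := by
    intro m
    rw [integral_congr_ae (Filter.Eventually.of_forall (hNU m))]
    have hint : ∀ n ∈ Finset.Icc 1 m,
        Integrable (fun ω => (n:ℝ) * (if T n ω = m then (1:ℝ) else 0)) ℙ := by
      intro n _
      have heq : (fun ω => (n:ℝ) * (if T n ω = m then (1:ℝ) else 0))
          = Set.indicator {ω | T n ω = m} (fun _ => (n:ℝ)) := by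
        funext ω
        by_cases h : T n ω = m <;> simp [Set.indicator_apply, h]
      rw [heq]
      exact (integrable_const _).indicator (hTsetMeas n m)
    rw [integral_finset_sum _ hint]
    refine Finset.sum_congr rfl fun n _ => ?_
    rw [integral_const_mul]
    congr 1
    calc (∫ ω, (if T n ω = m then (1:ℝ) else 0) ∂ℙ)
        = ∫ ω, Set.indicator {ω | T n ω = m} 1 ω ∂ℙ := by
          refine integral_congr_ae (Filter.Eventually.of_forall fun ω => ?_)
          by_cases h : T n ω = m <;> simp [Set.indicator_apply, h]
      _ = (ℙ {ω | T n ω = m}).toReal := integral_indicator_one (hTsetMeas n m)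
      _ = q n m := by rw [hTset n m]
  -- weighted integral with indicator of the first waiting time, with N·U
  have hkeyW : ∀ (c : ℕ → Prop),
      (∫ ω, (if c (S 0 ω) then (1:ℝ) else 0) * N t ω * U t ω ∂ℙ)
        = ∑ n ∈ Finset.Icc 1 t, (n:ℝ) *
            ∑ s ∈ Finset.range (t+1), if c s then po s * q (n-1) (t-s) else 0 := by
    intro c
    have hptw : ∀ ω, (if c (S 0 ω) then (1:ℝ) else 0) * N t ω * U t ω
        = ∑ n ∈ Finset.Icc 1 t, (n:ℝ) *
            ((if c (S 0 ω) then (1:ℝ) else 0) * (if T n ω = t then (1:ℝ) else 0)) := by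
      intro ω
      rw [mul_assoc, hNU t ω, Finset.mul_sum]
      refine Finset.sum_congr rfl fun n _ => ?_
      ring
    rw [integral_congr_ae (Filter.Eventually.of_forall hptw)]
    have hintg : ∀ n ∈ Finset.Icc 1 t, Integrable (fun ω => (n:ℝ) *
        ((if c (S 0 ω) then (1:ℝ) else 0) * (if T n ω = t then (1:ℝ) else 0))) ℙ := by
      intro n _
      have heq : (fun ω => (n:ℝ) *
          ((if c (S 0 ω) then (1:ℝ) else 0) * (if T n ω = t then (1:ℝ) else 0)))
          = Set.indicator ({ω | c (S 0 ω)} ∩ {ω | T n ω = t}) (fun _ => (n:ℝ)) := by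
        funext ω
        by_cases h1 : c (S 0 ω) <;> by_cases h2 : T n ω = t <;>
          simp [Set.indicator_apply, Set.mem_inter_iff, h1, h2]
      rw [heq]
      exact (integrable_const _).indicator
        (((hmeas 0) (MeasurableSet.of_discrete (s := {x | c x}))).inter (hTsetMeas n t))
    rw [integral_finset_sum _ hintg]
    refine Finset.sum_congr rfl fun n hn => ?_
    rw [integral_const_mul]
    congr 1
    exact hkey c 0 n (Finset.mem_Icc.1 hn).1
  -- weighted integral with indicator of the first waiting time, with U only
  have hkeyW2 : ∀ (c : ℕ → Prop),
      (∫ ω, (if c (S 0 ω) then (1:ℝ) else 0) * U t ω ∂ℙ)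
        = ∑ n ∈ Finset.Icc 1 t,
            ∑ s ∈ Finset.range (t+1), if c s then po s * q (n-1) (t-s) else 0 := by
    intro c
    have hptw : ∀ ω, (if c (S 0 ω) then (1:ℝ) else 0) * U t ω
        = ∑ n ∈ Finset.Icc 1 t,
            ((if c (S 0 ω) then (1:ℝ) else 0) * (if T n ω = t then (1:ℝ) else 0)) := by
      intro ω
      rw [hU t ω, Finset.mul_sum]
    rw [integral_congr_ae (Filter.Eventually.of_forall hptw)]
    have hintg : ∀ n ∈ Finset.Icc 1 t, Integrable (fun ω =>
        ((if c (S 0 ω) then (1:ℝ) else 0) * (if T n ω = t then (1:ℝ) else 0))) ℙ := by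
      intro n _
      have heq : (fun ω =>
          ((if c (S 0 ω) then (1:ℝ) else 0) * (if T n ω = t then (1:ℝ) else 0)))
          = Set.indicator ({ω | c (S 0 ω)} ∩ {ω | T n ω = t}) (fun _ => (1:ℝ)) := by
        funext ω
        by_cases h1 : c (S 0 ω) <;> by_cases h2 : T n ω = t <;>
          simp [Set.indicator_apply, Set.mem_inter_iff, h1, h2]
      rw [heq]
      exact (integrable_const _).indicator
        (((hmeas 0) (MeasurableSet.of_discrete (s := {x | c x}))).inter (hTsetMeas n t))
    rw [integral_finset_sum _ hintg]
    refine Finset.sum_congr rfl fun n hn => ?_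
    exact hkey c 0 n (Finset.mem_Icc.1 hn).1
  -- Rewrite the left-hand side
  have hLHS : (∑ n ∈ Finset.Icc 1 t, (n : ℝ) *
        ∫ ω, (if γ * t < (S (n - 1) ω : ℝ) then (1 : ℝ) else 0) *
          (if T n ω = t then (1 : ℝ) else 0) ∂ℙ)
      = ∑ n ∈ Finset.Icc 1 t, (n:ℝ) * ∑ s ∈ Finset.range (t+1),
          (if γ * (t:ℝ) < (s:ℝ) then po s * q (n-1) (t-s) else 0) := by
    refine Finset.sum_congr rfl fun n hn => ?_
    congr 1
    have h1 : 1 ≤ n := (Finset.mem_Icc.1 hn).1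
    have hk := hkey (fun s : ℕ => γ * (t:ℝ) < (s:ℝ)) (n-1) n (by omega)
    refine Eq.trans (integral_congr_ae (Filter.Eventually.of_forall fun ω => ?_))
      (hk.trans ?_)
    · by_cases h : γ * (t:ℝ) < ((S (n-1) ω : ℕ) : ℝ) <;> simp [h]
    · refine Finset.sum_congr rfl fun s _ => ?_
      by_cases h : γ * (t:ℝ) < (s:ℝ) <;> simp [h]
  -- Rewrite the second term
  have hterm2 : (∫ ω, (if γ * t < (S 0 ω : ℝ) ∧ (S 0 ω : ℝ) ≤ η * t then (1 : ℝ) else 0) *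
          U t ω ∂ℙ)
      = ∑ n ∈ Finset.Icc 1 t, ∑ s ∈ Finset.range (t+1),
          (if γ * (t:ℝ) < (s:ℝ) ∧ (s:ℝ) ≤ η * (t:ℝ) then po s * q (n-1) (t-s) else 0) := by
    have hk := hkeyW2 (fun s : ℕ => γ * (t:ℝ) < (s:ℝ) ∧ (s:ℝ) ≤ η * (t:ℝ))
    refine Eq.trans (integral_congr_ae (Filter.Eventually.of_forall fun ω => ?_))
      (hk.trans ?_)
    · by_cases h : γ * (t:ℝ) < ((S 0 ω : ℕ) : ℝ) ∧ ((S 0 ω : ℕ) : ℝ) ≤ η * (t:ℝ) <;>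
        simp [h]
    · refine Finset.sum_congr rfl fun n _ => Finset.sum_congr rfl fun s _ => ?_
      by_cases h : γ * (t:ℝ) < (s:ℝ) ∧ (s:ℝ) ≤ η * (t:ℝ) <;> simp [h]
  -- Rewrite the third term
  have hterm3 : (∫ ω, (if η * t < (S 0 ω : ℝ) then (1 : ℝ) else 0) * N t ω * U t ω ∂ℙ)
      = ∑ n ∈ Finset.Icc 1 t, (n:ℝ) * ∑ s ∈ Finset.range (t+1),
          (if η * (t:ℝ) < (s:ℝ) then po s * q (n-1) (t-s) else 0) := by
    have hk := hkeyW (fun s : ℕ => η * (t:ℝ) < (s:ℝ))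
    refine Eq.trans (integral_congr_ae (Filter.Eventually.of_forall fun ω => ?_))
      (hk.trans ?_)
    · by_cases h : η * (t:ℝ) < ((S 0 ω : ℕ) : ℝ) <;> simp [h]
    · first
      | rfl
      | (refine Finset.sum_congr rfl fun n _ => ?_
         congr 1
         refine Finset.sum_congr rfl fun s _ => ?_
         by_cases h : η * (t:ℝ) < (s:ℝ) <;> simp [h])
  -- Rewrite the first term (tsum)
  have hterm1 : (∑' s : ℕ, if γ * t < (s : ℝ) ∧ (s : ℝ) ≤ η * t then
          (∫ ω, N (t - s) ω * U (t - s) ω ∂ℙ) * po s else 0)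
      = ∑ s ∈ Finset.range (t+1), (if γ * (t:ℝ) < (s:ℝ) ∧ (s:ℝ) ≤ η * (t:ℝ) then
          (∑ m ∈ Finset.Icc 1 (t-s), (m:ℝ) * q m (t-s)) * po s else 0) := by
    rw [tsum_eq_sum (s := Finset.range (t+1)) ?_]
    · refine Finset.sum_congr rfl fun s _ => ?_
      by_cases h : γ * (t:ℝ) < (s:ℝ) ∧ (s:ℝ) ≤ η * (t:ℝ)
      · rw [if_pos h, if_pos h, hENU (t-s)]
      · rw [if_neg h, if_neg h]
    · intro s hs
      rw [if_neg]
      rintro ⟨-, h2⟩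
      have hs' : t + 1 ≤ s := by
        by_contra hcon
        exact hs (Finset.mem_range.2 (by omega))
      have hts : (t:ℝ) ≤ (s:ℝ) := by exact_mod_cast Nat.le_of_lt hs'
      linarith
  rw [hLHS, hterm1, hterm2, hterm3]
  -- Now pure algebra
  -- split the LHS according to whether s ≤ ηt or s > ηt
  have hsplit : ∀ n ∈ Finset.Icc 1 t, (n:ℝ) * (∑ s ∈ Finset.range (t+1),
        (if γ * (t:ℝ) < (s:ℝ) then po s * q (n-1) (t-s) else 0))
      = (∑ s ∈ Finset.range (t+1),
          (if γ * (t:ℝ) < (s:ℝ) ∧ (s:ℝ) ≤ η * (t:ℝ) then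
            (n:ℝ) * (po s * q (n-1) (t-s)) else 0))
        + (n:ℝ) * ∑ s ∈ Finset.range (t+1),
          (if η * (t:ℝ) < (s:ℝ) then po s * q (n-1) (t-s) else 0) := by
    intro n _
    rw [Finset.mul_sum, Finset.mul_sum, ← Finset.sum_add_distrib]
    refine Finset.sum_congr rfl fun s _ => ?_
    by_cases h2 : (s:ℝ) ≤ η * (t:ℝ)
    · have hc3 : ¬ (η * (t:ℝ) < (s:ℝ)) := not_lt.2 h2
      by_cases h1 : γ * (t:ℝ) < (s:ℝ)
      · rw [if_pos h1, if_pos ⟨h1, h2⟩, if_neg hc3]; ring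
      · rw [if_neg h1, if_neg (fun hh => h1 hh.1), if_neg hc3]; ring
    · push_neg at h2
      have hc2 : ¬ (γ * (t:ℝ) < (s:ℝ) ∧ (s:ℝ) ≤ η * (t:ℝ)) :=
        fun hh => absurd hh.2 (not_le.2 h2)
      have hc1 : γ * (t:ℝ) < (s:ℝ) := lt_trans hγηt h2
      rw [if_pos hc1, if_neg hc2, if_pos h2]; ring
  rw [Finset.sum_congr rfl hsplit, Finset.sum_add_distrib]
  congr 1
  -- middle identity
  have himg : Finset.Icc 1 t = Finset.image (· + 1) (Finset.range t) := by
    ext x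
    simp only [Finset.mem_Icc, Finset.mem_image, Finset.mem_range]
    constructor
    · rintro ⟨h1, h2⟩; exact ⟨x - 1, by omega, by omega⟩
    · rintro ⟨a, ha, rfl⟩; omega
  have hre : ∀ g : ℕ → ℝ, ∑ n ∈ Finset.Icc 1 t, g (n-1) = ∑ m ∈ Finset.range t, g m := by
    intro g
    rw [himg, Finset.sum_image (fun a _ b _ h => by omega)]
    simp
  rw [Finset.sum_comm]
  have hT2 : (∑ n ∈ Finset.Icc 1 t, ∑ s ∈ Finset.range (t+1),
      (if γ * (t:ℝ) < (s:ℝ) ∧ (s:ℝ) ≤ η * (t:ℝ) then po s * q (n-1) (t-s) else 0))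
      = ∑ s ∈ Finset.range (t+1), ∑ n ∈ Finset.Icc 1 t,
        (if γ * (t:ℝ) < (s:ℝ) ∧ (s:ℝ) ≤ η * (t:ℝ) then po s * q (n-1) (t-s) else 0) :=
    Finset.sum_comm
  rw [hT2, ← Finset.sum_add_distrib]
  refine Finset.sum_congr rfl fun s _ => ?_
  by_cases hc : γ * (t:ℝ) < (s:ℝ) ∧ (s:ℝ) ≤ η * (t:ℝ)
  · simp only [if_pos hc]
    have hs1 : 1 ≤ s := by
      have h0 : (0:ℝ) < (s:ℝ) := lt_trans (mul_pos hγ htpos) hc.1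
      have : 0 < s := by exact_mod_cast h0
      omega
    have hst : s < t := by
      have h2 : (s:ℝ) < (t:ℝ) := lt_of_le_of_lt hc.2 hηtt
      exact_mod_cast h2
    have hIcc : Finset.Icc 1 t = Finset.Ico 1 (t+1) := (Finset.Ico_add_one_right_eq_Icc 1 t).symm
    have eL : ∑ n ∈ Finset.Icc 1 t, (n:ℝ) * (po s * q (n-1) (t-s))
        = ∑ j ∈ Finset.range t, ((j:ℝ)+1) * (po s * q j (t-s)) := by
      rw [hIcc, Finset.sum_Ico_eq_sum_range]
      refine Finset.sum_congr rfl fun j _ => ?_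
      have h1 : 1 + j - 1 = j := by omega
      rw [h1]
      push_cast
      ring
    have eR : ∑ n ∈ Finset.Icc 1 t, (po s * q (n-1) (t-s))
        = ∑ j ∈ Finset.range t, po s * q j (t-s) := by
      rw [hIcc, Finset.sum_Ico_eq_sum_range]
      refine Finset.sum_congr rfl fun j _ => ?_
      have h1 : 1 + j - 1 = j := by omega
      rw [h1]
    have eM : ∑ m ∈ Finset.Icc 1 (t-s), (m:ℝ) * q m (t-s)
        = ∑ j ∈ Finset.range t, (j:ℝ) * q j (t-s) := by
      refine Finset.sum_subset ?_ fun x _ hnx => ?_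
      · intro x hx
        have := Finset.mem_Icc.1 hx
        exact Finset.mem_range.2 (by omega)
      · rw [Finset.mem_Icc] at hnx
        push_neg at hnx
        by_cases hx0 : x = 0
        · simp [hx0]
        · rw [hq0 x (t-s) (by omega), mul_zero]
    rw [eL, eR, eM, Finset.sum_mul, ← Finset.sum_add_distrib]
    refine Finset.sum_congr rfl fun j _ => ?_
    ring
  · simp only [if_neg hc]
    simp
end

section
/- Exponential tilting bound: suppose z, λ > 0 satisfy E[1{S₁ ≤ γt} e^{z S₁ − λ g(S₁)}] ≤ 1 and (z − αλ)t ≥ ξ + ln ξ with ξ > 1. Then Σ_{n=1}^t E[1{Σ_{i=1}^n g(S_i) ≤ αt} Π_{j=1}^n 1{S_j ≤ γt} 1{T_n = t}] ≤ e^{−ξ}/ξ. -/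
open Filter Topology MeasureTheory ProbabilityTheory

section Aux
variable {Ω : Type*} [MeasureSpace Ω] [IsProbabilityMeasure (ℙ : Measure Ω)]

noncomputable def yA (g : ℕ → ℝ) (γ : ℝ) (t : ℕ) (z lam : ℝ) (s : ℕ) : ℝ :=
  if (s : ℝ) ≤ γ * t then Real.exp (z * s - lam * g s) else 0

noncomputable def GA (S : ℕ → Ω → ℕ) (g : ℕ → ℝ) (γ : ℝ) (t : ℕ) (z lam : ℝ) (n m : ℕ) : ℝ :=
  ∫ ω, (∏ j ∈ Finset.range n, yA g γ t z lam (S j ω)) *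
      (if (∑ i ∈ Finset.range n, S i ω) = m then (1:ℝ) else 0) ∂ℙ

noncomputable def qA (S : ℕ → Ω → ℕ) (g : ℕ → ℝ) (γ : ℝ) (t : ℕ) (z lam : ℝ) (s : ℕ) : ℝ :=
  yA g γ t z lam s * (ℙ {ω | S 0 ω = s}).toReal

variable {g : ℕ → ℝ} {γ : ℝ} {t : ℕ} {z lam : ℝ}

lemma yA_nonneg (s : ℕ) : 0 ≤ yA g γ t z lam s := by unfold yA; split <;> positivity

lemma yA_eq_zero (hγ1 : γ < 1) {s : ℕ} (hts : t < s) : yA g γ t z lam s = 0 := by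
  unfold yA
  rw [if_neg]
  push_neg
  calc γ * t ≤ 1 * t := mul_le_mul_of_nonneg_right hγ1.le (Nat.cast_nonneg t)
    _ ≤ (t : ℝ) := by norm_num
    _ < s := by exact_mod_cast hts

noncomputable def BA (g : ℕ → ℝ) (γ : ℝ) (t : ℕ) (z lam : ℝ) : ℝ :=
  ∑ u ∈ Finset.range (t+1), yA g γ t z lam u

lemma BA_nonneg : 0 ≤ BA g γ t z lam := Finset.sum_nonneg fun _ _ => yA_nonneg _

lemma yA_le_BA (hγ1 : γ < 1) (s : ℕ) : yA g γ t z lam s ≤ BA g γ t z lam := by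
  rcases le_or_gt s t with hs | hs
  · exact Finset.single_le_sum (fun u _ => yA_nonneg u) (Finset.mem_range.2 (Nat.lt_succ_of_le hs))
  · rw [yA_eq_zero hγ1 hs]; exact BA_nonneg

lemma integrable_of_bdd {f : Ω → ℝ} (hf : Measurable f) (C : ℝ) (h : ∀ ω, |f ω| ≤ C) :
    Integrable f ℙ :=
  (integrable_const C).mono' hf.aestronglyMeasurable (Filter.Eventually.of_forall (by simpa using h))

set_option linter.unusedSectionVars false
section G
variable {S : ℕ → Ω → ℕ} (hmeas : ∀ i, Measurable (S i))
include hmeas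

lemma prod_yA_meas (n : ℕ) :
    Measurable fun ω => ∏ j ∈ Finset.range n, yA g γ t z lam (S j ω) :=
  Finset.measurable_prod _ fun j _ => Measurable.comp' measurable_from_top (hmeas j)

lemma ind_sum_meas (n m : ℕ) :
    Measurable fun ω => (if (∑ i ∈ Finset.range n, S i ω) = m then (1:ℝ) else 0) := by
  have hs : MeasurableSet {ω | (∑ i ∈ Finset.range n, S i ω) = m} :=
    (Finset.measurable_sum _ fun i _ => hmeas i) (measurableSet_singleton m)
  exact Measurable.ite hs measurable_const measurable_const

omit hmeas in
lemma prod_yA_le (hγ1 : γ < 1) (n : ℕ) (ω : Ω) :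
    ∏ j ∈ Finset.range n, yA g γ t z lam (S j ω) ≤ BA g γ t z lam ^ n := by
  calc ∏ j ∈ Finset.range n, yA g γ t z lam (S j ω)
      ≤ ∏ _j ∈ Finset.range n, BA g γ t z lam :=
        Finset.prod_le_prod (fun j _ => yA_nonneg _) (fun j _ => yA_le_BA hγ1 _)
    _ = BA g γ t z lam ^ n := by rw [Finset.prod_const, Finset.card_range]

lemma GA_integrand_meas (n m : ℕ) :
    Measurable fun ω => (∏ j ∈ Finset.range n, yA g γ t z lam (S j ω)) *
      (if (∑ i ∈ Finset.range n, S i ω) = m then (1:ℝ) else 0) :=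
  (prod_yA_meas hmeas n).mul (ind_sum_meas hmeas n m)

omit hmeas in
lemma GA_integrand_nonneg (n m : ℕ) (ω : Ω) :
    0 ≤ (∏ j ∈ Finset.range n, yA g γ t z lam (S j ω)) *
      (if (∑ i ∈ Finset.range n, S i ω) = m then (1:ℝ) else 0) := by
  apply mul_nonneg (Finset.prod_nonneg fun j _ => yA_nonneg _)
  split <;> norm_num

lemma GA_integrand_integrable (hγ1 : γ < 1) (n m : ℕ) :
    Integrable (fun ω => (∏ j ∈ Finset.range n, yA g γ t z lam (S j ω)) *
      (if (∑ i ∈ Finset.range n, S i ω) = m then (1:ℝ) else 0)) ℙ := by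
  apply integrable_of_bdd (GA_integrand_meas hmeas n m) (BA g γ t z lam ^ n)
  intro ω
  rw [abs_of_nonneg (GA_integrand_nonneg n m ω)]
  calc (∏ j ∈ Finset.range n, yA g γ t z lam (S j ω)) *
        (if (∑ i ∈ Finset.range n, S i ω) = m then (1:ℝ) else 0)
      ≤ (∏ j ∈ Finset.range n, yA g γ t z lam (S j ω)) * 1 := by
        apply mul_le_mul_of_nonneg_left _ (Finset.prod_nonneg fun j _ => yA_nonneg _)
        split <;> norm_num
    _ = ∏ j ∈ Finset.range n, yA g γ t z lam (S j ω) := mul_one _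
    _ ≤ BA g γ t z lam ^ n := prod_yA_le hγ1 n ω

omit hmeas in
lemma GA_nonneg (n m : ℕ) : 0 ≤ GA S g γ t z lam n m :=
  integral_nonneg (GA_integrand_nonneg n m)

omit hmeas in
lemma GA_zero (m : ℕ) : GA S g γ t z lam 0 m = if 0 = m then (1:ℝ) else 0 := by
  unfold GA
  by_cases h : m = 0
  · subst h; simp
  · simp [h, Ne.symm h]

omit hmeas in
lemma GA_eq_zero_of_lt (hpos : ∀ i ω, 1 ≤ S i ω) {n m : ℕ} (hmn : m < n) :
    GA S g γ t z lam n m = 0 := by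
  unfold GA
  have : ∀ ω : Ω, (∏ j ∈ Finset.range n, yA g γ t z lam (S j ω)) *
      (if (∑ i ∈ Finset.range n, S i ω) = m then (1:ℝ) else 0) = 0 := by
    intro ω
    have hge : n ≤ ∑ i ∈ Finset.range n, S i ω := by
      calc n = ∑ _i ∈ Finset.range n, 1 := by simp
        _ ≤ ∑ i ∈ Finset.range n, S i ω := Finset.sum_le_sum fun i _ => hpos i ω
    rw [if_neg (by omega), mul_zero]
  simp only [this, integral_zero]


omit hmeas in
/-- pointwise decomposition of the `n+1`-step integrand by the value of `S n` -/
lemma GA_decomp_pointwise (hpos : ∀ i ω, 1 ≤ S i ω) (n m : ℕ) (ω : Ω) :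
    (∏ j ∈ Finset.range (n+1), yA g γ t z lam (S j ω)) *
      (if (∑ i ∈ Finset.range (n+1), S i ω) = m then (1:ℝ) else 0)
    = ∑ s ∈ Finset.Icc 1 m,
        ((∏ j ∈ Finset.range n, yA g γ t z lam (S j ω)) *
          (if (∑ i ∈ Finset.range n, S i ω) = m - s then (1:ℝ) else 0)) *
        (if S n ω = s then yA g γ t z lam s else 0) := by
  set a := S n ω with ha
  set T := ∑ i ∈ Finset.range n, S i ω with hT
  have ha1 : 1 ≤ a := hpos n ω
  rw [Finset.prod_range_succ, Finset.sum_range_succ, ← hT, ← ha]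
  by_cases ham : a ∈ Finset.Icc 1 m
  · rw [Finset.sum_eq_single_of_mem a ham (fun s hs hne => by
      have hz : (if a = s then yA g γ t z lam s else 0) = 0 := if_neg (fun h => hne h.symm)
      rw [hz, mul_zero])]
    rw [if_pos rfl]
    have hiff : (T + a = m) ↔ (T = m - a) := by
      have := (Finset.mem_Icc.1 ham).2; omega
    by_cases hm : T + a = m
    · rw [if_pos hm, if_pos (hiff.1 hm)]; ring
    · rw [if_neg hm, if_neg (fun h => hm (hiff.2 h))]; ring
  · have hma : m < T + a := by
      have : m < a := by
        rcases Finset.mem_Icc.not.1 ham with h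
        omega
      omega
    rw [if_neg (by omega), mul_zero]
    symm
    apply Finset.sum_eq_zero
    intro s hs
    have : a ≠ s := fun h => ham (h ▸ hs)
    rw [if_neg this, mul_zero]

lemma GA_succ (hγ1 : γ < 1) (hpos : ∀ i ω, 1 ≤ S i ω)
    (hindep : iIndepFun S ℙ)
    (hident : ∀ i, Measure.map (S i) ℙ = Measure.map (S 0) ℙ) (n m : ℕ) :
    GA S g γ t z lam (n+1) m
      = ∑ s ∈ Finset.Icc 1 m, qA S g γ t z lam s * GA S g γ t z lam n (m - s) := by
  have hBmeas : ∀ s : ℕ, Measurable fun ω => (if S n ω = s then yA g γ t z lam s else 0) :=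
    fun s => Measurable.comp' (measurable_from_top
      (f := fun u : ℕ => if u = s then yA g γ t z lam s else 0)) (hmeas n)
  have key : ∀ s : ℕ,
      (∫ ω, ((∏ j ∈ Finset.range n, yA g γ t z lam (S j ω)) *
          (if (∑ i ∈ Finset.range n, S i ω) = m - s then (1:ℝ) else 0)) *
        (if S n ω = s then yA g γ t z lam s else 0) ∂ℙ)
      = GA S g γ t z lam n (m - s) *
          (yA g γ t z lam s * (ℙ {ω | S 0 ω = s}).toReal) := by
    intro s
    -- independence
    have hd : Disjoint (Finset.range n) ({n} : Finset ℕ) := by simp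
    have base := hindep.indepFun_finset (Finset.range n) {n} hd hmeas
    set φ : ((i : (Finset.range n : Finset ℕ)) → ℕ) → ℝ := fun v =>
      (∏ j ∈ (Finset.range n).attach, yA g γ t z lam (v j)) *
        (if (∑ j ∈ (Finset.range n).attach, v j) = m - s then (1:ℝ) else 0) with hφ
    set ψ : ((i : ({n} : Finset ℕ)) → ℕ) → ℝ := fun v =>
      if v ⟨n, Finset.mem_singleton_self n⟩ = s then yA g γ t z lam s else 0 with hψ
    have hφmeas : Measurable φ := by
      apply Measurable.mul
      · exact Finset.measurable_prod _ fun j _ =>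
          Measurable.comp' measurable_from_top (measurable_pi_apply j)
      · exact Measurable.ite
          ((Finset.measurable_sum _ fun j _ => measurable_pi_apply j)
            (measurableSet_singleton (m - s))) measurable_const measurable_const
    have hψmeas : Measurable ψ := by
      exact Measurable.comp' (measurable_from_top
        (f := fun u : ℕ => if u = s then yA g γ t z lam s else 0))
        (measurable_pi_apply (⟨n, Finset.mem_singleton_self n⟩ : ({n} : Finset ℕ)))
    have indep := base.comp hφmeas hψmeas
    have hAeq : (φ ∘ fun ω (i : (Finset.range n : Finset ℕ)) => S i ω)
        = fun ω => (∏ j ∈ Finset.range n, yA g γ t z lam (S j ω)) *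
          (if (∑ i ∈ Finset.range n, S i ω) = m - s then (1:ℝ) else 0) := by
      funext ω
      simp only [Function.comp_apply, hφ]
      rw [Finset.prod_attach _ (fun j => yA g γ t z lam (S j ω)),
        Finset.sum_attach _ (fun j => S j ω)]
    have hBeq : (ψ ∘ fun ω (i : (({n} : Finset ℕ) : Finset ℕ)) => S i ω)
        = fun ω => (if S n ω = s then yA g γ t z lam s else 0) := by
      funext ω; simp only [Function.comp_apply, hψ]
    rw [hAeq, hBeq] at indep
    have hAmeas := (GA_integrand_meas (g:=g) (γ:=γ) (t:=t) (z:=z) (lam:=lam) hmeas n (m - s))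
    have := IndepFun.integral_fun_mul_eq_mul_integral indep hAmeas.aestronglyMeasurable (hBmeas s).aestronglyMeasurable
    have heq : (∫ ω, ((∏ j ∈ Finset.range n, yA g γ t z lam (S j ω)) *
          (if (∑ i ∈ Finset.range n, S i ω) = m - s then (1:ℝ) else 0)) *
        (if S n ω = s then yA g γ t z lam s else 0) ∂ℙ)
        = GA S g γ t z lam n (m - s) *
          ∫ ω, (if S n ω = s then yA g γ t z lam s else 0) ∂ℙ := this
    rw [heq]
    congr 1
    -- compute ∫ B
    have hset : MeasurableSet {ω | S n ω = s} := hmeas n (measurableSet_singleton s)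
    have hind : (fun ω => (if S n ω = s then yA g γ t z lam s else 0))
        = Set.indicator {ω | S n ω = s} (fun _ => yA g γ t z lam s) := by
      funext ω
      rw [Set.indicator_apply]
      rfl
    rw [hind, MeasureTheory.integral_indicator_const _ hset, smul_eq_mul, measureReal_def]
    have hmap : ℙ {ω | S n ω = s} = ℙ {ω | S 0 ω = s} := by
      have h1 : ℙ {ω | S n ω = s} = Measure.map (S n) ℙ {s} := by
        rw [Measure.map_apply (hmeas n) (measurableSet_singleton s)]; rfl
      have h2 : ℙ {ω | S 0 ω = s} = Measure.map (S 0) ℙ {s} := by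
        rw [Measure.map_apply (hmeas 0) (measurableSet_singleton s)]; rfl
      rw [h1, h2, hident n]
    rw [hmap, mul_comm]
  -- put it together
  have hcongr : GA S g γ t z lam (n+1) m
      = ∫ ω, ∑ s ∈ Finset.Icc 1 m,
        ((∏ j ∈ Finset.range n, yA g γ t z lam (S j ω)) *
          (if (∑ i ∈ Finset.range n, S i ω) = m - s then (1:ℝ) else 0)) *
        (if S n ω = s then yA g γ t z lam s else 0) ∂ℙ := by
    unfold GA; congr 1; funext ω; exact GA_decomp_pointwise hpos n m ω
  rw [hcongr, MeasureTheory.integral_finset_sum]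
  · apply Finset.sum_congr rfl
    intro s _
    rw [key s]
    unfold qA
    ring
  · intro s _
    apply integrable_of_bdd ((GA_integrand_meas hmeas n (m-s)).mul (hBmeas s))
      (BA g γ t z lam ^ n * BA g γ t z lam)
    intro ω
    simp only [Pi.mul_apply]
    rw [abs_mul]
    apply mul_le_mul
    · rw [abs_of_nonneg (GA_integrand_nonneg n (m-s) ω)]
      calc (∏ j ∈ Finset.range n, yA g γ t z lam (S j ω)) *
            (if (∑ i ∈ Finset.range n, S i ω) = m - s then (1:ℝ) else 0)
          ≤ (∏ j ∈ Finset.range n, yA g γ t z lam (S j ω)) * 1 := by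
            apply mul_le_mul_of_nonneg_left _ (Finset.prod_nonneg fun j _ => yA_nonneg _)
            split <;> norm_num
        _ = _ := mul_one _
        _ ≤ BA g γ t z lam ^ n := prod_yA_le hγ1 n ω
    · have hB0 : (0:ℝ) ≤ (if S n ω = s then yA g γ t z lam s else 0) := by
        split
        · exact yA_nonneg s
        · exact le_rfl
      rw [abs_of_nonneg hB0]
      split
      · exact yA_le_BA hγ1 s
      · exact BA_nonneg
    · exact abs_nonneg _
    · exact pow_nonneg BA_nonneg n


lemma integral_ite_val (i s : ℕ) (c : ℝ) :
    ∫ ω, (if S i ω = s then c else 0) ∂ℙ = c * (ℙ {ω | S i ω = s}).toReal := by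
  have hset : MeasurableSet {ω | S i ω = s} := hmeas i (measurableSet_singleton s)
  have hind : (fun ω => (if S i ω = s then c else 0))
      = Set.indicator {ω | S i ω = s} (fun _ => c) := by
    funext ω; rw [Set.indicator_apply]; rfl
  rw [hind, MeasureTheory.integral_indicator_const _ hset, smul_eq_mul, mul_comm, measureReal_def]

omit hmeas in
lemma qA_nonneg (s : ℕ) : 0 ≤ qA S g γ t z lam s :=
  mul_nonneg (yA_nonneg s) ENNReal.toReal_nonneg

lemma sum_qA_le_one (hγ1 : γ < 1) (hpos : ∀ i ω, 1 ≤ S i ω)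
    (htilt : (∫ ω, (if (S 0 ω : ℝ) ≤ γ * t then
        Real.exp (z * S 0 ω - lam * g (S 0 ω)) else 0) ∂ℙ) ≤ 1) :
    ∑ s ∈ Finset.Icc 1 t, qA S g γ t z lam s ≤ 1 := by
  have hpt : ∀ ω : Ω, (if (S 0 ω : ℝ) ≤ γ * t then
      Real.exp (z * S 0 ω - lam * g (S 0 ω)) else 0)
      = ∑ s ∈ Finset.Icc 1 t, (if S 0 ω = s then yA g γ t z lam s else 0) := by
    intro ω
    have hLHS : (if (S 0 ω : ℝ) ≤ γ * t then
        Real.exp (z * S 0 ω - lam * g (S 0 ω)) else 0) = yA g γ t z lam (S 0 ω) := rfl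
    rw [hLHS]
    rcases le_or_gt (S 0 ω) t with hle | hlt
    · have hmem : S 0 ω ∈ Finset.Icc 1 t := Finset.mem_Icc.2 ⟨hpos 0 ω, hle⟩
      rw [Finset.sum_eq_single_of_mem (S 0 ω) hmem (fun s hs hne =>
        if_neg (fun h => hne h.symm)), if_pos rfl]
    · rw [yA_eq_zero hγ1 hlt]
      symm
      apply Finset.sum_eq_zero
      intro s hs
      apply if_neg
      intro h
      have := (Finset.mem_Icc.1 hs).2
      omega
  have : (∫ ω, (if (S 0 ω : ℝ) ≤ γ * t then
      Real.exp (z * S 0 ω - lam * g (S 0 ω)) else 0) ∂ℙ)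
      = ∑ s ∈ Finset.Icc 1 t, qA S g γ t z lam s := by
    calc (∫ ω, (if (S 0 ω : ℝ) ≤ γ * t then
        Real.exp (z * S 0 ω - lam * g (S 0 ω)) else 0) ∂ℙ)
        = ∫ ω, ∑ s ∈ Finset.Icc 1 t, (if S 0 ω = s then yA g γ t z lam s else 0) ∂ℙ := by
          congr 1; funext ω; exact hpt ω
      _ = ∑ s ∈ Finset.Icc 1 t, ∫ ω, (if S 0 ω = s then yA g γ t z lam s else 0) ∂ℙ := by
          apply MeasureTheory.integral_finset_sum
          intro s _
          apply integrable_of_bdd (Measurable.comp' (measurable_from_top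
            (f := fun u : ℕ => if u = s then yA g γ t z lam s else 0)) (hmeas 0))
            (yA g γ t z lam s)
          intro ω
          have h0 : (0:ℝ) ≤ (if S 0 ω = s then yA g γ t z lam s else 0) := by
            split
            · exact yA_nonneg s
            · exact le_rfl
          rw [abs_of_nonneg h0]
          split
          · exact le_rfl
          · exact yA_nonneg s
      _ = ∑ s ∈ Finset.Icc 1 t, qA S g γ t z lam s := by
          apply Finset.sum_congr rfl
          intro s _
          rw [integral_ite_val hmeas 0 s]
          rfl
  rw [← this]
  exact htilt

lemma GA_sum_le_one (hγ1 : γ < 1) (hpos : ∀ i ω, 1 ≤ S i ω)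
    (hindep : iIndepFun S ℙ)
    (hident : ∀ i, Measure.map (S i) ℙ = Measure.map (S 0) ℙ)
    (hq : ∑ s ∈ Finset.Icc 1 t, qA S g γ t z lam s ≤ 1) :
    ∀ k, k ≤ t → ∑ n ∈ Finset.range (t+1), GA S g γ t z lam n k ≤ 1 := by
  intro k
  induction k using Nat.strong_induction_on with
  | _ k ih =>
  intro hk
  rw [Finset.sum_range_succ']
  rcases Nat.eq_zero_or_pos k with hk0 | hk1
  · subst hk0
    have h1 : ∀ i ∈ Finset.range t, GA S g γ t z lam (i+1) 0 = 0 :=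
      fun i _ => GA_eq_zero_of_lt hpos (Nat.succ_pos i)
    rw [Finset.sum_congr rfl h1]
    simp [GA_zero]
  · have h0 : GA S g γ t z lam 0 k = 0 := by
      rw [GA_zero, if_neg (by omega)]
    rw [h0, add_zero]
    have hrec : ∀ i ∈ Finset.range t, GA S g γ t z lam (i+1) k
        = ∑ s ∈ Finset.Icc 1 k, qA S g γ t z lam s * GA S g γ t z lam i (k - s) :=
      fun i _ => GA_succ hmeas hγ1 hpos hindep hident i k
    rw [Finset.sum_congr rfl hrec, Finset.sum_comm]
    have hbd : ∀ s ∈ Finset.Icc 1 k,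
        (∑ i ∈ Finset.range t, qA S g γ t z lam s * GA S g γ t z lam i (k - s))
        ≤ qA S g γ t z lam s := by
      intro s hs
      obtain ⟨hs1, hs2⟩ := Finset.mem_Icc.1 hs
      rw [← Finset.mul_sum]
      have hinner : (∑ i ∈ Finset.range t, GA S g γ t z lam i (k - s)) ≤ 1 := by
        calc (∑ i ∈ Finset.range t, GA S g γ t z lam i (k - s))
            ≤ ∑ i ∈ Finset.range (t+1), GA S g γ t z lam i (k - s) := by
              apply Finset.sum_le_sum_of_subset_of_nonneg
                (Finset.range_subset_range.2 (Nat.le_succ t))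
              intro i _ _
              exact GA_nonneg i (k - s)
          _ ≤ 1 := ih (k - s) (by omega) (by omega)
      calc qA S g γ t z lam s * (∑ i ∈ Finset.range t, GA S g γ t z lam i (k - s))
          ≤ qA S g γ t z lam s * 1 := by
            apply mul_le_mul_of_nonneg_left hinner (qA_nonneg s)
        _ = qA S g γ t z lam s := mul_one _
    calc (∑ s ∈ Finset.Icc 1 k, ∑ i ∈ Finset.range t,
          qA S g γ t z lam s * GA S g γ t z lam i (k - s))
        ≤ ∑ s ∈ Finset.Icc 1 k, qA S g γ t z lam s := Finset.sum_le_sum hbd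
      _ ≤ ∑ s ∈ Finset.Icc 1 t, qA S g γ t z lam s := by
          apply Finset.sum_le_sum_of_subset_of_nonneg
          · intro s hs
            obtain ⟨h1, h2⟩ := Finset.mem_Icc.1 hs
            exact Finset.mem_Icc.2 ⟨h1, h2.trans hk⟩
          · intro s _ _
            exact qA_nonneg s
      _ ≤ 1 := hq

end G
end Aux

section Main
variable {Ω : Type*} [MeasureSpace Ω] [IsProbabilityMeasure (ℙ : Measure Ω)]
variable {S : ℕ → Ω → ℕ} {g : ℕ → ℝ} {α γ : ℝ} {t : ℕ} {z lam : ℝ}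

set_option linter.unusedSectionVars false

/-- pointwise Chernoff bound -/
lemma chernoff_pointwise (hlam : 0 < lam) (n : ℕ) (ω : Ω) :
    (if (∑ i ∈ Finset.range n, g (S i ω)) ≤ α * t then (1 : ℝ) else 0) *
      (∏ j ∈ Finset.range n, if (S j ω : ℝ) ≤ γ * t then (1 : ℝ) else 0) *
      (if (∑ i ∈ Finset.range n, S i ω) = t then (1 : ℝ) else 0)
    ≤ Real.exp ((α * lam - z) * t) *
      ((∏ j ∈ Finset.range n, yA g γ t z lam (S j ω)) *
        (if (∑ i ∈ Finset.range n, S i ω) = t then (1 : ℝ) else 0)) := by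
  by_cases hT : (∑ i ∈ Finset.range n, S i ω) = t
  · rw [if_pos hT, mul_one, mul_one]
    by_cases hall : ∀ j ∈ Finset.range n, (S j ω : ℝ) ≤ γ * t
    · have h1 : (∏ j ∈ Finset.range n, if (S j ω : ℝ) ≤ γ * t then (1:ℝ) else 0) = 1 :=
        Finset.prod_eq_one fun j hj => if_pos (hall j hj)
      have h2 : (∏ j ∈ Finset.range n, yA g γ t z lam (S j ω))
          = Real.exp (∑ j ∈ Finset.range n, (z * (S j ω : ℝ) - lam * g (S j ω))) := by
        rw [Real.exp_sum]
        exact Finset.prod_congr rfl fun j hj => if_pos (hall j hj)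
      have h3 : (∑ j ∈ Finset.range n, (z * (S j ω : ℝ) - lam * g (S j ω)))
          = z * t - lam * ∑ j ∈ Finset.range n, g (S j ω) := by
        rw [Finset.sum_sub_distrib, ← Finset.mul_sum, ← Finset.mul_sum]
        congr 2
        rw [← Nat.cast_sum, hT]
      rw [h1, h2, h3, mul_one, ← Real.exp_add]
      split_ifs with hg
      · apply Real.one_le_exp
        have : lam * ∑ j ∈ Finset.range n, g (S j ω) ≤ lam * (α * t) :=
          mul_le_mul_of_nonneg_left hg hlam.le
        nlinarith
      · exact (Real.exp_pos _).le
    · push_neg at hall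
      obtain ⟨j, hj, hjγ⟩ := hall
      have h1 : (∏ j ∈ Finset.range n, if (S j ω : ℝ) ≤ γ * t then (1:ℝ) else 0) = 0 :=
        Finset.prod_eq_zero hj (if_neg (not_le.2 hjγ))
      have h2 : (∏ j ∈ Finset.range n, yA g γ t z lam (S j ω)) = 0 := by
        apply Finset.prod_eq_zero hj
        unfold yA
        exact if_neg (not_le.2 hjγ)
      rw [h1, h2, mul_zero, mul_zero]
  · rw [if_neg hT, mul_zero, mul_zero, mul_zero]

end Main

/-- Exponential tilting bound: if `z, λ > 0` satisfy
`E[1{S₁ ≤ γt} e^{z S₁ - λ g(S₁)}] ≤ 1` and `(z - α λ) t ≥ ξ + ln ξ` with `ξ > 1`, then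
`∑_{n=1}^t E[1{∑_{i=1}^n g(Sᵢ) ≤ αt} ∏_{j=1}^n 1{S_j ≤ γt} 1{T_n = t}] ≤ e^{-ξ}/ξ`. -/
theorem stmt_17 (Ω : Type*) [MeasureSpace Ω] [IsProbabilityMeasure (ℙ : Measure Ω)]
    (S : ℕ → Ω → ℕ) (hmeas : ∀ i, Measurable (S i))
    (hpos : ∀ i ω, 1 ≤ S i ω)
    (hindep : iIndepFun S ℙ)
    (hident : ∀ i, Measure.map (S i) ℙ = Measure.map (S 0) ℙ)
    (g : ℕ → ℝ) (α γ : ℝ) (hα : α ∈ Set.Ioo (0 : ℝ) 1) (hγ : γ ∈ Set.Ioo (0 : ℝ) 1)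
    (t : ℕ) (ht : 1 ≤ t)
    (z lam ξ : ℝ) (hz : 0 < z) (hlam : 0 < lam) (hξ : 1 < ξ)
    (htilt : (∫ ω, (if (S 0 ω : ℝ) ≤ γ * t then
        Real.exp (z * S 0 ω - lam * g (S 0 ω)) else 0) ∂ℙ) ≤ 1)
    (hrate : ξ + Real.log ξ ≤ (z - α * lam) * t) :
    (∑ n ∈ Finset.Icc 1 t,
      ∫ ω, (if (∑ i ∈ Finset.range n, g (S i ω)) ≤ α * t then (1 : ℝ) else 0) *
        (∏ j ∈ Finset.range n, if (S j ω : ℝ) ≤ γ * t then (1 : ℝ) else 0) *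
        (if (∑ i ∈ Finset.range n, S i ω) = t then (1 : ℝ) else 0) ∂ℙ) ≤
      Real.exp (-ξ) / ξ := by
  obtain ⟨hα0, hα1⟩ := hα
  obtain ⟨hγ0, hγ1⟩ := hγ
  have hterm : ∀ n ∈ Finset.Icc 1 t,
      (∫ ω, (if (∑ i ∈ Finset.range n, g (S i ω)) ≤ α * t then (1 : ℝ) else 0) *
        (∏ j ∈ Finset.range n, if (S j ω : ℝ) ≤ γ * t then (1 : ℝ) else 0) *
        (if (∑ i ∈ Finset.range n, S i ω) = t then (1 : ℝ) else 0) ∂ℙ)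
      ≤ Real.exp ((α * lam - z) * t) * GA S g γ t z lam n t := by
    intro n _
    have m1 : Measurable fun ω =>
        (if (∑ i ∈ Finset.range n, g (S i ω)) ≤ α * t then (1 : ℝ) else 0) := by
      have hsum : Measurable fun ω => ∑ i ∈ Finset.range n, g (S i ω) :=
        Finset.measurable_sum _ fun i _ => Measurable.comp' measurable_from_top (hmeas i)
      exact Measurable.ite (hsum measurableSet_Iic) measurable_const measurable_const
    have m2 : Measurable fun ω =>
        (∏ j ∈ Finset.range n, if (S j ω : ℝ) ≤ γ * t then (1 : ℝ) else 0) :=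
      Finset.measurable_prod _ fun j _ => Measurable.comp' (measurable_from_top
        (f := fun u : ℕ => if (u : ℝ) ≤ γ * t then (1:ℝ) else 0)) (hmeas j)
    have hint1 : Integrable (fun ω =>
        (if (∑ i ∈ Finset.range n, g (S i ω)) ≤ α * t then (1 : ℝ) else 0) *
        (∏ j ∈ Finset.range n, if (S j ω : ℝ) ≤ γ * t then (1 : ℝ) else 0) *
        (if (∑ i ∈ Finset.range n, S i ω) = t then (1 : ℝ) else 0)) ℙ := by
      apply integrable_of_bdd ((m1.mul m2).mul (ind_sum_meas hmeas n t)) 1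
      intro ω
      have n1 : (0:ℝ) ≤ (if (∑ i ∈ Finset.range n, g (S i ω)) ≤ α * t then (1 : ℝ) else 0) := by
        split <;> norm_num
      have u1 : (if (∑ i ∈ Finset.range n, g (S i ω)) ≤ α * t then (1 : ℝ) else 0) ≤ 1 := by
        split <;> norm_num
      have n2 : (0:ℝ) ≤ (∏ j ∈ Finset.range n, if (S j ω : ℝ) ≤ γ * t then (1 : ℝ) else 0) :=
        Finset.prod_nonneg fun j _ => by split <;> norm_num
      have u2 : (∏ j ∈ Finset.range n, if (S j ω : ℝ) ≤ γ * t then (1 : ℝ) else 0) ≤ 1 :=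
        Finset.prod_le_one (fun j _ => by split <;> norm_num) (fun j _ => by split <;> norm_num)
      have n3 : (0:ℝ) ≤ (if (∑ i ∈ Finset.range n, S i ω) = t then (1 : ℝ) else 0) := by
        split <;> norm_num
      have u3 : (if (∑ i ∈ Finset.range n, S i ω) = t then (1 : ℝ) else 0) ≤ 1 := by
        split <;> norm_num
      simp only [Pi.mul_apply]
      rw [abs_of_nonneg (mul_nonneg (mul_nonneg n1 n2) n3)]
      exact mul_le_one₀ (mul_le_one₀ u1 n2 u2) n3 u3
    have hint2 : Integrable (fun ω => Real.exp ((α * lam - z) * t) *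
        ((∏ j ∈ Finset.range n, yA g γ t z lam (S j ω)) *
          (if (∑ i ∈ Finset.range n, S i ω) = t then (1 : ℝ) else 0))) ℙ :=
      (GA_integrand_integrable hmeas hγ1 n t).const_mul _
    calc (∫ ω, (if (∑ i ∈ Finset.range n, g (S i ω)) ≤ α * t then (1 : ℝ) else 0) *
          (∏ j ∈ Finset.range n, if (S j ω : ℝ) ≤ γ * t then (1 : ℝ) else 0) *
          (if (∑ i ∈ Finset.range n, S i ω) = t then (1 : ℝ) else 0) ∂ℙ)
        ≤ ∫ ω, Real.exp ((α * lam - z) * t) *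
            ((∏ j ∈ Finset.range n, yA g γ t z lam (S j ω)) *
              (if (∑ i ∈ Finset.range n, S i ω) = t then (1 : ℝ) else 0)) ∂ℙ :=
          integral_mono hint1 hint2 (chernoff_pointwise hlam n)
      _ = Real.exp ((α * lam - z) * t) * GA S g γ t z lam n t := by
          rw [MeasureTheory.integral_const_mul]
          rfl
  have hGsum : (∑ n ∈ Finset.Icc 1 t, GA S g γ t z lam n t) ≤ 1 := by
    calc (∑ n ∈ Finset.Icc 1 t, GA S g γ t z lam n t)
        ≤ ∑ n ∈ Finset.range (t+1), GA S g γ t z lam n t := by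
          apply Finset.sum_le_sum_of_subset_of_nonneg
          · intro n hn
            obtain ⟨h1, h2⟩ := Finset.mem_Icc.1 hn
            exact Finset.mem_range.2 (by omega)
          · intro n _ _
            exact GA_nonneg n t
      _ ≤ 1 := GA_sum_le_one hmeas hγ1 hpos hindep hident
          (sum_qA_le_one hmeas hγ1 hpos htilt) t le_rfl
  have hξ0 : (0:ℝ) < ξ := lt_trans one_pos hξ
  calc (∑ n ∈ Finset.Icc 1 t,
      ∫ ω, (if (∑ i ∈ Finset.range n, g (S i ω)) ≤ α * t then (1 : ℝ) else 0) *
        (∏ j ∈ Finset.range n, if (S j ω : ℝ) ≤ γ * t then (1 : ℝ) else 0) *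
        (if (∑ i ∈ Finset.range n, S i ω) = t then (1 : ℝ) else 0) ∂ℙ)
      ≤ ∑ n ∈ Finset.Icc 1 t, Real.exp ((α * lam - z) * t) * GA S g γ t z lam n t :=
        Finset.sum_le_sum hterm
    _ = Real.exp ((α * lam - z) * t) * ∑ n ∈ Finset.Icc 1 t, GA S g γ t z lam n t :=
        (Finset.mul_sum _ _ _).symm
    _ ≤ Real.exp ((α * lam - z) * t) * 1 :=
        mul_le_mul_of_nonneg_left hGsum (Real.exp_pos _).le
    _ = Real.exp ((α * lam - z) * t) := mul_one _
    _ ≤ Real.exp (-(ξ + Real.log ξ)) := by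
        apply Real.exp_le_exp.2
        have : (α * lam - z) * t = -((z - α * lam) * t) := by ring
        rw [this]
        linarith
    _ = Real.exp (-ξ) / ξ := by
        rw [neg_add, Real.exp_add, Real.exp_neg (Real.log ξ), Real.exp_log hξ0,
          div_eq_mul_inv]
end
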